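/- arXiv:1903.09932 — 6 statements merged into one kernel-verified Lean document; each statement's English description precedes it below -/
import Mathlib

section
/- For a Leibniz algebra L, every centralizer C_L(x), x ∈ L, is a two-sided ideal of L if and only if L is a CL-algebra (i.e., both a left and a right CL-algebra). -/
/-- A (left) Leibniz algebra over a field `K`: a vector space with a bilinear bracket
satisfying `[x,[y,z]] = [[x,y],z] - [[x,z],y]`. -/
structure LeibnizAlgebra (K L : Type*) [Field K] [AddCommGroup L] [Module K L] where
  bracket : L →ₗ[K] L →ₗ[K] L
  leibniz : ∀ x y z : L,
    bracket x (bracket y z) = bracket (bracket x y) z - bracket (bracket x z) y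

variable {K L : Type*} [Field K] [AddCommGroup L] [Module K L]

/-- The centralizer `C_L(x) = {y : [x,y] = 0 = [y,x]}`. -/
def centralizer (A : LeibnizAlgebra K L) (x : L) : Set L :=
  {y | A.bracket x y = 0 ∧ A.bracket y x = 0}

/-- `L` is a CL-algebra: for all `a, x` and `y ∈ C_L(x)`,
`[[x,a],y] = 0`, `[[a,x],y] = 0`, `[y,[a,x]] = 0`. -/
def IsCL (A : LeibnizAlgebra K L) : Prop :=
  ∀ a x : L, ∀ y ∈ centralizer A x,
    A.bracket (A.bracket x a) y = 0 ∧ A.bracket (A.bracket a x) y = 0 ∧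
      A.bracket y (A.bracket a x) = 0

/-- `a` is a CL-element of `L`. -/
def IsCLElem (A : LeibnizAlgebra K L) (a : L) : Prop :=
  ∀ x : L, ∀ y ∈ centralizer A x,
    A.bracket (A.bracket x a) y = 0 ∧ A.bracket (A.bracket a x) y = 0 ∧
      A.bracket y (A.bracket a x) = 0

/-- Lower central series, indexed so that `lcs A n = L^(n+1)`:
`lcs A 0 = L` and `lcs A (n+1) = [lcs A n, L]`. -/
def lcs (A : LeibnizAlgebra K L) : ℕ → Submodule K L
  | 0 => ⊤
  | n + 1 => Submodule.span K {z | ∃ u ∈ lcs A n, ∃ v : L, z = A.bracket u v}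
/-- every centralizer is a two-sided ideal iff `L` is a CL-algebra. -/
theorem centralizer_ideal_iff_CL (A : LeibnizAlgebra K L) :
    (∀ x a : L, ∀ y ∈ centralizer A x,
      A.bracket a y ∈ centralizer A x ∧ A.bracket y a ∈ centralizer A x) ↔ IsCL A := by
  constructor
  · intro h a x y hy
    obtain ⟨hxy, hyx⟩ := hy
    obtain ⟨⟨hA1, hA2⟩, hB1, hB2⟩ := h x a y ⟨hxy, hyx⟩
    refine ⟨?_, ?_, ?_⟩
    · have := A.leibniz x a y
      rw [hxy, hA1] at this
      simpa using this.symm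
    · have := A.leibniz a x y
      rw [hxy, hA2] at this
      simpa using this.symm
    · have := A.leibniz y a x
      rw [hyx, hB2] at this
      simpa using this
  · intro h x a y hy
    obtain ⟨hxy, hyx⟩ := hy
    obtain ⟨c1, c2, c3⟩ := h a x y ⟨hxy, hyx⟩
    refine ⟨⟨?_, ?_⟩, ?_, ?_⟩
    · have := A.leibniz x a y
      rw [hxy, c1] at this
      simpa using this
    · have := A.leibniz a y x
      rw [hyx, c2] at this
      simpa using this.symm
    · have := A.leibniz x y a
      rw [hxy, c1] at this
      simpa using this
    · have := A.leibniz y a x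
      rw [hyx, c3] at this
      simpa using this.symm
end

section
/- The 2-dimensional algebra over a field F with basis {a,b} and the only nonzero product [a,a] = b is a Leibniz algebra, is not abelian, and is a CL-algebra. -/
variable {K L : Type*} [Field K] [AddCommGroup L] [Module K L]

/-- The basis vector `a` of the 2-dimensional algebra. -/
def ea (F : Type*) [Field F] : Fin 2 → F := Pi.single 0 1

/-- The basis vector `b` of the 2-dimensional algebra. -/
def eb (F : Type*) [Field F] : Fin 2 → F := Pi.single 1 1

def twoDimBracket (F : Type*) [Field F] : (Fin 2 → F) →ₗ[F] (Fin 2 → F) →ₗ[F] (Fin 2 → F) :=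
  LinearMap.mk₂ F (fun x y => (x 0 * y 0) • eb F)
    (fun x x' y => by simp [add_mul, add_smul])
    (fun c x y => by simp [mul_assoc, smul_smul])
    (fun x y y' => by simp [mul_add, add_smul])
    (fun c x y => by
      simp only [Pi.smul_apply, smul_eq_mul, smul_smul]
      ring_nf)

lemma eb_zero (F : Type*) [Field F] : eb F 0 = 0 := by simp [eb, Pi.single]

/-- the 2-dimensional algebra over a field `F` with basis `{a, b}` and only
nonzero product `[a,a] = b` is a Leibniz algebra, is not abelian, and is a CL-algebra. -/
theorem two_dim_example_is_CL (F : Type*) [Field F] :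
    ∃ A : LeibnizAlgebra F (Fin 2 → F),
      A.bracket (ea F) (ea F) = eb F ∧ A.bracket (ea F) (eb F) = 0 ∧
      A.bracket (eb F) (ea F) = 0 ∧ A.bracket (eb F) (eb F) = 0 ∧
      (¬ ∀ x y : Fin 2 → F, A.bracket x y = 0) ∧ IsCL A := by
  refine ⟨⟨twoDimBracket F, ?_⟩, ?_, ?_, ?_, ?_, ?_, ?_⟩
  · intro x y z
    simp [twoDimBracket, eb_zero, smul_smul]
  · simp [twoDimBracket, ea, Pi.single]
  · simp [twoDimBracket, eb_zero]
  · simp [twoDimBracket, eb_zero]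
  · simp [twoDimBracket, eb_zero]
  · intro h
    have h1 := h (ea F) (ea F)
    simp [twoDimBracket, ea, Pi.single] at h1
    have := congrFun h1 1
    simp [eb, Pi.single] at this
  · intro a x y _
    refine ⟨?_, ?_, ?_⟩ <;>
      simp [twoDimBracket, eb_zero, smul_smul]
end

section
/- Let L be a Leibniz algebra, x ∈ L, y ∈ C_L(x), and let a ∈ L be a CL-element (i.e., for all x' ∈ L and y' ∈ C_L(x'): [[x',a],y']=0, [[a,x'],y']=0, [y',[a,x']]=0). Then [a,y] ∈ C_L(x) and [y,a] ∈ C_L(x). -/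
variable {K L : Type*} [Field K] [AddCommGroup L] [Module K L]

/-- if `y ∈ C_L(x)` and `a` is a CL-element, then `[a,y], [y,a] ∈ C_L(x)`. -/
theorem bracket_CL_elem_mem_centralizer (A : LeibnizAlgebra K L) (x y a : L)
    (hy : y ∈ centralizer A x) (ha : IsCLElem A a) :
    A.bracket a y ∈ centralizer A x ∧ A.bracket y a ∈ centralizer A x := by
  obtain ⟨h1, h2⟩ := hy
  obtain ⟨c1, c2, c3⟩ := ha x y ⟨h1, h2⟩
  refine ⟨⟨?_, ?_⟩, ?_, ?_⟩
  · rw [A.leibniz x a y, c1, h1, map_zero, LinearMap.zero_apply, sub_zero]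
  · have := A.leibniz a y x
    rw [h2, map_zero] at this
    rw [eq_comm, sub_eq_zero] at this
    rw [this, c2]
  · rw [A.leibniz x y a, h1, map_zero, LinearMap.zero_apply, zero_sub, c1, neg_zero]
  · have := A.leibniz y a x
    rw [c3] at this
    rw [eq_comm, sub_eq_zero] at this
    rw [this, h2, map_zero, LinearMap.zero_apply]
end

section
/- In a Leibniz algebra L, the set S of all CL-elements is a Leibniz subalgebra of L: it is closed under subtraction, scalar multiplication, and the bracket. -/
variable {K L : Type*} [Field K] [AddCommGroup L] [Module K L]

lemma sq_skew (A : LeibnizAlgebra K L) (y u v : L) :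
    A.bracket y (A.bracket u v) = - A.bracket y (A.bracket v u) := by
  rw [A.leibniz y u v, A.leibniz y v u]; abel

lemma cent_of_CL (A : LeibnizAlgebra K L) {a x y : L} (ha : IsCLElem A a)
    (hy : y ∈ centralizer A x) :
    y ∈ centralizer A (A.bracket x a) ∧ y ∈ centralizer A (A.bracket a x) := by
  obtain ⟨h1, h2, h3⟩ := ha x y hy
  refine ⟨⟨h1, ?_⟩, ⟨h2, h3⟩⟩
  rw [sq_skew A y x a, h3, neg_zero]

/-- the set of CL-elements is a Leibniz subalgebra: closed under
subtraction, scalar multiplication, and the bracket. -/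
theorem CL_elements_subalgebra (A : LeibnizAlgebra K L) :
    (∀ a b : L, IsCLElem A a → IsCLElem A b → IsCLElem A (a - b)) ∧
    (∀ (c : K) (a : L), IsCLElem A a → IsCLElem A (c • a)) ∧
    (∀ a b : L, IsCLElem A a → IsCLElem A b → IsCLElem A (A.bracket a b)) := by
  refine ⟨?_, ?_, ?_⟩
  · intro a b ha hb x y hy
    obtain ⟨a1, a2, a3⟩ := ha x y hy
    obtain ⟨b1, b2, b3⟩ := hb x y hy
    simp only [map_sub, LinearMap.sub_apply, a1, a2, a3, b1, b2, b3, sub_zero, sub_self,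
      and_self]
  · intro c a ha x y hy
    obtain ⟨a1, a2, a3⟩ := ha x y hy
    simp only [map_smul, LinearMap.smul_apply, a1, a2, a3, smul_zero, and_self]
  · intro a b ha hb x y hy
    obtain ⟨hyxa, hyax⟩ := cent_of_CL A ha hy
    obtain ⟨hyxb, hybx⟩ := cent_of_CL A hb hy
    refine ⟨?_, ?_, ?_⟩
    · rw [A.leibniz x a b]
      have h1 : A.bracket (A.bracket (A.bracket x a) b) y = 0 :=
        (hb (A.bracket x a) y hyxa).1
      have h2 : A.bracket (A.bracket (A.bracket x b) a) y = 0 :=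
        (ha (A.bracket x b) y hyxb).1
      simp [map_sub, LinearMap.sub_apply, h1, h2]
    · have hdecomp : A.bracket (A.bracket a b) x
          = A.bracket a (A.bracket b x) + A.bracket (A.bracket a x) b := by
        rw [A.leibniz a b x]; abel
      rw [hdecomp]
      have h1 : A.bracket (A.bracket a (A.bracket b x)) y = 0 :=
        (ha (A.bracket b x) y hybx).2.1
      have h2 : A.bracket (A.bracket (A.bracket a x) b) y = 0 :=
        (hb (A.bracket a x) y hyax).1
      simp [map_add, LinearMap.add_apply, h1, h2]
    · have hdecomp : A.bracket (A.bracket a b) x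
          = A.bracket a (A.bracket b x) + A.bracket (A.bracket a x) b := by
        rw [A.leibniz a b x]; abel
      rw [hdecomp, map_add]
      have h1 : A.bracket y (A.bracket a (A.bracket b x)) = 0 :=
        (ha (A.bracket b x) y hybx).2.2
      have h2 : A.bracket y (A.bracket (A.bracket a x) b) = 0 := by
        rw [sq_skew A y (A.bracket a x) b, (hb (A.bracket a x) y hyax).2.2, neg_zero]
      rw [h1, h2, add_zero]
end

section
/- There exists a finite-dimensional CL-algebra which is not nilpotent: the 3-dimensional complex algebra L with basis e1,e2,e3 and nonzero products [e3,e3]=e1, [e3,e2]=e2, [e2,e3]=-e2 is a Leibniz algebra, is a CL-algebra, and L^k ⊇ span(e2) ≠ 0 for all k, so L is not nilpotent. -/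
variable {K L : Type*} [Field K] [AddCommGroup L] [Module K L]

/-- Standard basis vectors of `ℂ³`, with `e 0, e 1, e 2` playing the roles of `e₁, e₂, e₃`. -/
def e (i : Fin 3) : Fin 3 → ℂ := Pi.single i 1


noncomputable def br : (Fin 3 → ℂ) →ₗ[ℂ] (Fin 3 → ℂ) →ₗ[ℂ] (Fin 3 → ℂ) :=
  LinearMap.mk₂ ℂ (fun x y => (x 2 * y 2) • e 0 + (x 2 * y 1 - x 1 * y 2) • e 1)
    (by intro m m' n; simp only [Pi.add_apply]; module)
    (by intro c m n; simp only [Pi.smul_apply, smul_eq_mul]; module)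
    (by intro m n n'; simp only [Pi.add_apply]; module)
    (by intro c m n; simp only [Pi.smul_apply, smul_eq_mul]; module)

lemma br_apply (x y : Fin 3 → ℂ) :
    br x y = (x 2 * y 2) • e 0 + (x 2 * y 1 - x 1 * y 2) • e 1 := rfl

@[simp] lemma e00 : e 0 0 = 1 := rfl
@[simp] lemma e01 : e 0 1 = 0 := rfl
@[simp] lemma e02 : e 0 2 = 0 := rfl
@[simp] lemma e10 : e 1 0 = 0 := rfl
@[simp] lemma e11 : e 1 1 = 1 := rfl
@[simp] lemma e12 : e 1 2 = 0 := rfl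
@[simp] lemma e20 : e 2 0 = 0 := rfl
@[simp] lemma e21 : e 2 1 = 0 := rfl
@[simp] lemma e22 : e 2 2 = 1 := rfl

noncomputable def AA : LeibnizAlgebra ℂ (Fin 3 → ℂ) where
  bracket := br
  leibniz := by
    intro x y z
    simp only [br_apply, Pi.add_apply, Pi.smul_apply, smul_eq_mul]
    funext i
    fin_cases i <;>
      simp only [Pi.add_apply, Pi.sub_apply, Pi.smul_apply, smul_eq_mul,
        e00, e01, e02, e10, e11, e12, e20, e21, e22] <;> ring

lemma key (x y : Fin 3 → ℂ) (h1 : br x y = 0) (h2 : br y x = 0) :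
    y 2 = 0 ∨ (x 1 = 0 ∧ x 2 = 0) := by
  by_cases hy : y 2 = 0
  · exact Or.inl hy
  · right
    have c0 := congrFun h1 0
    have c1 := congrFun h1 1
    simp only [br_apply, Pi.add_apply, Pi.smul_apply, smul_eq_mul, e00, e01, e10, e11,
      Pi.zero_apply, mul_one, mul_zero, add_zero, zero_add] at c0 c1
    have hx2 : x 2 = 0 := by
      rcases mul_eq_zero.mp c0 with h | h
      · exact h
      · exact absurd h hy
    have hx1 : x 1 = 0 := by
      rw [hx2] at c1
      simp only [zero_mul, zero_sub, neg_eq_zero] at c1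
      rcases mul_eq_zero.mp c1 with h | h
      · exact h
      · exact absurd h hy
    exact ⟨hx1, hx2⟩

lemma br_zero_of (u y : Fin 3 → ℂ) (hu : u 2 = 0) (h : y 2 = 0 ∨ u 1 = 0) :
    br u y = 0 ∧ br y u = 0 := by
  constructor <;>
  · rw [br_apply]
    rcases h with h | h <;>
      funext i <;> fin_cases i <;>
      simp only [Pi.add_apply, Pi.smul_apply, smul_eq_mul, Pi.zero_apply,
        e00, e01, e02, e10, e11, e12] <;>
      rw [hu] <;> try rw [h]
    all_goals ring

lemma e1_mem_lcs : ∀ k : ℕ, e 1 ∈ lcs AA k := by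
  intro k
  induction k with
  | zero => exact Submodule.mem_top
  | succ n ih =>
    apply Submodule.subset_span
    refine ⟨e 1, ih, -(e 2), ?_⟩
    show e 1 = br (e 1) (-(e 2))
    rw [map_neg, br_apply]
    funext i; fin_cases i <;>
      simp only [Pi.neg_apply, Pi.add_apply, Pi.smul_apply, smul_eq_mul,
        e00, e01, e02, e10, e11, e12, e20, e21, e22] <;> ring

/-- the 3-dimensional complex algebra with nonzero products
`[e₃,e₃]=e₁`, `[e₃,e₂]=e₂`, `[e₂,e₃]=-e₂` is a Leibniz algebra which is a CL-algebra
but not nilpotent: every term `L^k = lcs (k-1)` contains `span(e₂) ≠ 0`. -/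
theorem CL_not_nilpotent :
    ∃ A : LeibnizAlgebra ℂ (Fin 3 → ℂ),
      A.bracket (e 2) (e 2) = e 0 ∧ A.bracket (e 2) (e 1) = e 1 ∧
      A.bracket (e 1) (e 2) = -(e 1) ∧
      A.bracket (e 0) (e 0) = 0 ∧ A.bracket (e 0) (e 1) = 0 ∧ A.bracket (e 0) (e 2) = 0 ∧
      A.bracket (e 1) (e 0) = 0 ∧ A.bracket (e 1) (e 1) = 0 ∧ A.bracket (e 2) (e 0) = 0 ∧
      IsCL A ∧
      (∀ k : ℕ, Submodule.span ℂ {e 1} ≤ lcs A k) ∧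
      Submodule.span ℂ {e 1} ≠ (⊥ : Submodule ℂ (Fin 3 → ℂ)) ∧
      (∀ n : ℕ, lcs A n ≠ ⊥) := by
  refine ⟨AA, ?_, ?_, ?_, ?_, ?_, ?_, ?_, ?_, ?_, ?hcl, ?hle, ?hne, ?hlcs⟩
  case hcl =>
    -- IsCL
    intro a x y hy
    obtain ⟨h1, h2⟩ := hy
    have hk := key x y h1 h2
    have hxa2 : (br x a) 2 = 0 := by rw [br_apply]; simp
    have hax2 : (br a x) 2 = 0 := by rw [br_apply]; simp
    have hxa1 : y 2 = 0 ∨ (br x a) 1 = 0 := by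
      rcases hk with h | ⟨hx1, hx2⟩
      · exact Or.inl h
      · right; rw [br_apply]; simp [hx1, hx2]
    have hax1 : y 2 = 0 ∨ (br a x) 1 = 0 := by
      rcases hk with h | ⟨hx1, hx2⟩
      · exact Or.inl h
      · right; rw [br_apply]; simp [hx1, hx2]
    exact ⟨(br_zero_of _ _ hxa2 hxa1).1, (br_zero_of _ _ hax2 hax1).1,
      (br_zero_of _ _ hax2 hax1).2⟩
  case hle =>
    intro k
    rw [Submodule.span_le, Set.singleton_subset_iff]
    exact e1_mem_lcs k
  case hne =>
    intro h
    have h2 : e 1 = 0 := by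
      have := Submodule.mem_span_singleton_self (R := ℂ) (e 1)
      rwa [h, Submodule.mem_bot] at this
    exact one_ne_zero (congrFun h2 1)
  case hlcs =>
    intro n h
    have h2 := e1_mem_lcs n
    rw [h, Submodule.mem_bot] at h2
    exact one_ne_zero (congrFun h2 1)
  all_goals {
    show br _ _ = _
    rw [br_apply]
    funext i; fin_cases i <;>
      simp only [Pi.add_apply, Pi.smul_apply, smul_eq_mul, Pi.zero_apply, Pi.neg_apply,
        e00, e01, e02, e10, e11, e12, e20, e21, e22] <;> ring }
end

section
/- If (L, d) is a Lie algebra with a derivation d satisfying d∘d = 0, then the derived bracket [x,y]_d := [x, d y] makes L a Leibniz algebra, i.e., [x,[y,z]_d]_d = [[x,y]_d, z]_d - [[x,z]_d, y]_d for all x,y,z. -/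
/-- if `(L, d)` is a Lie algebra with a derivation `d` satisfying
`d ∘ d = 0`, then the derived bracket `[x,y]_d := ⁅x, d y⁆` satisfies the Leibniz
identity `[x,[y,z]_d]_d = [[x,y]_d, z]_d - [[x,z]_d, y]_d`. -/
theorem derived_bracket_leibniz {K L : Type*} [Field K] [LieRing L] [LieAlgebra K L]
    (d : L →ₗ[K] L)
    (hder : ∀ x y : L, d ⁅x, y⁆ = ⁅d x, y⁆ + ⁅x, d y⁆)
    (hd2 : ∀ x : L, d (d x) = 0) :
    ∀ x y z : L, ⁅x, d ⁅y, d z⁆⁆ = ⁅⁅x, d y⁆, d z⁆ - ⁅⁅x, d z⁆, d y⁆ := by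
  intro x y z
  simp only [hder, hd2, lie_add, lie_zero, add_zero, zero_add]
  rw [leibniz_lie, ← lie_skew (d y)]
  abel
end
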